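/- Let H be a complex Hilbert space and A, B ∈ B(H) with A∘B ≠ 0 and A∘B = λ • (B∘A) for some λ ∈ ℂ. If A is self-adjoint or B is self-adjoint, then λ is real (Im λ = 0). -/

import Mathlib

open scoped ENNReal

lemma aux_selfAdjoint_left {A : Type*} [CStarAlgebra A] [StarModule ℂ A]
    (a b : A) (lam : ℂ) (hne : a * b ≠ 0) (hcomm : a * b = lam • (b * a))
    (ha : IsSelfAdjoint a) : lam.im = 0 := by
  have hlam : lam ≠ 0 := by
    rintro rfl; simp at hcomm; exact hne hcomm
  have hsa : star a = a := ha
  -- adjoint of hcomm : star b * a = conj lam • (a * star b)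
  have hadj : star b * a = (starRingEnd ℂ) lam • (a * star b) := by
    have := congrArg star hcomm
    simpa [star_mul, star_smul, hsa] using this
  -- S₂ := b * a * star b is self-adjoint
  have hS2 : IsSelfAdjoint (b * a * star b) := by
    simp [IsSelfAdjoint, star_mul, hsa, mul_assoc]
  -- S₁ := star b * a * b is self-adjoint
  have hS1 : IsSelfAdjoint (star b * a * b) := by
    simp [IsSelfAdjoint, star_mul, hsa, mul_assoc]
  -- N := b * star b * a = conj lam • S₂
  have hN : b * star b * a = (starRingEnd ℂ) lam • (b * a * star b) := by
    calc b * star b * a = b * (star b * a) := by rw [mul_assoc]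
      _ = (starRingEnd ℂ) lam • (b * (a * star b)) := by rw [hadj, mul_smul_comm]
      _ = (starRingEnd ℂ) lam • (b * a * star b) := by rw [mul_assoc]
  by_cases hS2z : b * a * star b = 0
  · -- then b * star b * a = 0, hence star b * a = 0, hence a * b = 0, contradiction
    exfalso
    have h0 : b * star b * a = 0 := by rw [hN, hS2z, smul_zero]
    have h1 : star (star b * a) * (star b * a) = 0 := by
      have : star (star b * a) * (star b * a) = a * (b * star b * a) := by
        simp [star_mul, star_star, hsa, mul_assoc]
      rw [this, h0, mul_zero]
    have h2 : star b * a = 0 := CStarRing.star_mul_self_eq_zero_iff _ |>.mp h1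
    have : a * b = 0 := by
      have := congrArg star h2
      simpa [star_mul, star_star, hsa] using this
    exact hne this
  · -- S₂ ≠ 0 : it has a nonzero (real) spectral point t
    obtain ⟨t, ht, htne⟩ : ∃ t ∈ spectrum ℂ (b * a * star b), t ≠ 0 := by
      by_contra hcon
      push_neg at hcon
      have : spectralRadius ℂ (b * a * star b) = 0 := by
        rw [spectralRadius]
        refine le_antisymm (iSup₂_le fun k hk => ?_) bot_le
        simp [hcon k hk]
      rw [hS2.spectralRadius_eq_nnnorm] at this
      exact hS2z (by simpa using this)
    -- conj lam * t ∈ spectrum of N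
    have hu : IsUnit ((starRingEnd ℂ) lam) := by
      simpa using (isUnit_iff_ne_zero.mpr (by simpa using hlam : (starRingEnd ℂ) lam ≠ 0))
    set c : ℂˣ := Units.mk0 ((starRingEnd ℂ) lam) (by simpa using hlam) with hc
    have hmem : (c : ℂ) * t ∈ spectrum ℂ (b * star b * a) := by
      rw [hN]
      have : (c : ℂ) • t ∈ spectrum ℂ ((c : ℂ) • (b * a * star b)) := by
        have := (spectrum.smul_mem_smul_iff (a := b * a * star b) (s := t) (r := c)).mpr ht
        simpa [Units.smul_def] using this
      rw [show (starRingEnd ℂ) lam = (c : ℂ) from rfl]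
      simpa [smul_eq_mul] using this
    -- spectrum (b * (star b * a)) \ {0} = spectrum ((star b * a) * b) \ {0}
    have hswap : (c : ℂ) * t ∈ spectrum ℂ (star b * a * b) := by
      have hz : (c : ℂ) * t ≠ 0 := by
        simp only [hc, Units.val_mk0]
        exact mul_ne_zero (by simpa using hlam) htne
      have h1 : (c : ℂ) * t ∈ spectrum ℂ (b * (star b * a)) \ {0} := by
        constructor
        · rwa [← mul_assoc]
        · simpa using hz
      have h2 : (c : ℂ) * t ∈ spectrum ℂ (star b * a * b) \ {0} := by
        rw [spectrum.nonzero_mul_comm (star b * a) b]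
        exact h1
      exact h2.1
    -- both t and conj lam * t are real
    have ht_re : t = (t.re : ℂ) := hS2.mem_spectrum_eq_re ht
    have hzt_re : (c : ℂ) * t = (((c : ℂ) * t).re : ℂ) := hS1.mem_spectrum_eq_re hswap
    -- deduce lam.im = 0
    have him : ((c : ℂ) * t).im = 0 := by rw [hzt_re]; simp
    have htim : t.im = 0 := by rw [ht_re]; simp
    have : (c : ℂ).im * t.re = 0 := by
      have := him
      rw [Complex.mul_im, htim] at this
      simpa using this
    have htre : t.re ≠ 0 := by
      intro h
      apply htne
      rw [ht_re, h]; simp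
    have hcim : (c : ℂ).im = 0 := by
      rcases mul_eq_zero.mp this with h | h
      · exact h
      · exact absurd h htre
    simp only [hc, Units.val_mk0, Complex.conj_im, neg_eq_zero] at hcim
    exact hcim

theorem comm_conditions_selfAdjoint_real
    {H : Type*} [NormedAddCommGroup H] [InnerProductSpace ℂ H] [CompleteSpace H]
    (A B : H →L[ℂ] H) (lam : ℂ)
    (hne : A ∘L B ≠ 0) (hcomm : A ∘L B = lam • (B ∘L A))
    (hsa : IsSelfAdjoint A ∨ IsSelfAdjoint B) :
    lam.im = 0 := by
  have hne' : A * B ≠ 0 := hne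
  have hcomm' : A * B = lam • (B * A) := hcomm
  have hlam : lam ≠ 0 := by
    rintro rfl; simp at hcomm'; exact hne' hcomm'
  rcases hsa with hA | hB
  · exact aux_selfAdjoint_left A B lam hne' hcomm' hA
  · have hBA : B * A ≠ 0 := by
      intro h; rw [h, smul_zero] at hcomm'; exact hne' hcomm'
    have hcomm2 : B * A = lam⁻¹ • (A * B) := by
      rw [hcomm', smul_smul, inv_mul_cancel₀ hlam, one_smul]
    have := aux_selfAdjoint_left B A lam⁻¹ hBA hcomm2 hB
    rw [Complex.inv_im, neg_div, neg_eq_zero, div_eq_zero_iff] at this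
    rcases this with h | h
    · exact h
    · exact absurd (Complex.normSq_eq_zero.mp h) hlam
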